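/- Fix an n-player stage game in which each player has k actions and payoffs lie in [0,1], and suppose the game is μ-sensitive: for all players i ≠ j, all actions a_i, a_j, a_j', and all profiles a_{−ij} of the remaining players, |u_i(a_i, a_j, a_{−ij}) − u_i(a_i, a_j', a_{−ij})| ≤ μ. Then the function mapping an action profile a to the vector in ℝ^{n·k} of all counterfactual payoffs (u_i(a', a_{−i}))_{i ≤ n, a' ∈ A_i} has L² sensitivity at most √(n·k)·μ with respect to unilateral changes of a single player's action. Consequently, the private monitoring structure in which each player i receives the signal (u_i(a', a_{−i}) + N(0,σ²))_{a' ∈ A_i}, with all noise coordinates i.i.d. Gaussian with fixed variance σ² > 0, is (ε,γ)-differentially private with ε + γ = O(μ·√(n·k·log(1/μ))) as μ → 0. -/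

import Mathlib

open MeasureTheory ProbabilityTheory
open scoped BigOperators ENNReal

section OneDim
variable {σ : ℝ}

lemma var_ne_zero (hσ : 0 < σ) : (σ ^ 2).toNNReal ≠ 0 := by
  simp [Real.toNNReal_eq_zero, not_le]
  positivity

lemma pdf_le (hσ : 0 < σ) (c x : ℝ) :
    gaussianPDFReal c (σ ^ 2).toNNReal x ≤ 1 / σ := by
  unfold gaussianPDFReal
  have h1 : Real.exp (-(x - c) ^ 2 / (2 * ((σ ^ 2).toNNReal : ℝ))) ≤ 1 := by
    apply Real.exp_le_one_iff.mpr
    have : (0:ℝ) ≤ ((σ ^ 2).toNNReal : ℝ) := by positivity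
    apply div_nonpos_of_nonpos_of_nonneg
    · nlinarith [sq_nonneg (x - c)]
    · linarith
  have h2 : σ ≤ Real.sqrt (2 * Real.pi * ((σ ^ 2).toNNReal : ℝ)) := by
    have hc : ((σ ^ 2).toNNReal : ℝ) = σ ^ 2 := by
      rw [Real.coe_toNNReal _ (by positivity)]
    rw [hc]
    have : σ = Real.sqrt (σ ^ 2) := by
      rw [Real.sqrt_sq hσ.le]
    rw [this]
    apply Real.sqrt_le_sqrt
    nlinarith [Real.pi_gt_three, sq_nonneg σ]
  have h3 : (Real.sqrt (2 * Real.pi * ((σ ^ 2).toNNReal : ℝ)))⁻¹ ≤ 1 / σ := by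
    rw [one_div]
    exact inv_anti₀ hσ h2
  calc (Real.sqrt (2 * Real.pi * ((σ ^ 2).toNNReal : ℝ)))⁻¹
        * Real.exp (-(x - c) ^ 2 / (2 * ((σ ^ 2).toNNReal : ℝ)))
      ≤ (Real.sqrt (2 * Real.pi * ((σ ^ 2).toNNReal : ℝ)))⁻¹ * 1 := by
        apply mul_le_mul_of_nonneg_left h1 (by positivity)
    _ ≤ 1 / σ := by rw [mul_one]; exact h3

end OneDim


section TSubPart
variable {σ : ℝ}

lemma pdf_mono_of_sq (hσ : 0 < σ) {c c' x : ℝ} (h : (x - c) ^ 2 ≤ (x - c') ^ 2) :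
    gaussianPDFReal c' (σ ^ 2).toNNReal x ≤ gaussianPDFReal c (σ ^ 2).toNNReal x := by
  unfold gaussianPDFReal
  have hv : (0:ℝ) < ((σ ^ 2).toNNReal : ℝ) := by
    rw [Real.coe_toNNReal _ (by positivity)]; positivity
  apply mul_le_mul_of_nonneg_left _ (by positivity)
  apply Real.exp_le_exp.mpr
  apply div_le_div_of_nonneg_right (by linarith) (by linarith)

/-- The "positive part of the density difference" integral bound, ordered case. -/
lemma tsub_integral_le (hσ : 0 < σ) {c c' : ℝ} (hlt : c' < c) :
    ∫⁻ x, (gaussianPDF c (σ ^ 2).toNNReal x - gaussianPDF c' (σ ^ 2).toNNReal x) ∂volume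
      ≤ ENNReal.ofReal ((c - c') / σ) := by
  set v : NNReal := (σ ^ 2).toNNReal with hvdef
  have hv : v ≠ 0 := var_ne_zero hσ
  set m : ℝ := (c + c') / 2 with hm
  set d : ℝ := c - c' with hd
  have hd0 : 0 < d := by simp [hd]; linarith
  -- pointwise the integrand is supported on `Ici m`
  have hpt : ∀ x, gaussianPDF c v x - gaussianPDF c' v x
      = (Set.Ici m).indicator (fun x => gaussianPDF c v x - gaussianPDF c' v x) x := by
    intro x
    by_cases hx : x ∈ Set.Ici m
    · rw [Set.indicator_of_mem hx]
    · rw [Set.indicator_of_notMem hx]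
      have hxm : x < m := lt_of_not_ge hx
      have : gaussianPDFReal c v x ≤ gaussianPDFReal c' v x := by
        apply pdf_mono_of_sq hσ
        nlinarith
      exact tsub_eq_zero_of_le (ENNReal.ofReal_le_ofReal this)
  rw [lintegral_congr hpt, lintegral_indicator measurableSet_Ici _]
  -- subtraction under the integral
  have hfin : ∫⁻ x in Set.Ici m, gaussianPDF c' v x ∂volume ≠ ⊤ := by
    refine ne_top_of_le_ne_top ?_ (setLIntegral_le_lintegral _ _)
    rw [lintegral_gaussianPDF_eq_one c' hv]
    exact ENNReal.one_ne_top
  have hle : ∀ x ∈ Set.Ici m, gaussianPDF c' v x ≤ gaussianPDF c v x := by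
    intro x hx
    apply ENNReal.ofReal_le_ofReal
    apply pdf_mono_of_sq hσ
    have : m ≤ x := hx
    nlinarith
  rw [lintegral_sub (measurable_gaussianPDF c' v) hfin
    (ae_restrict_of_forall_mem measurableSet_Ici hle)]
  rw [← gaussianReal_apply c hv, ← gaussianReal_apply c' hv]
  -- translate the second measure
  have hmap : gaussianReal c' v (Set.Ici m) = gaussianReal c v (Set.Ici (m + d)) := by
    have h1 : gaussianReal c' v = Measure.map (· + (c' - c)) (gaussianReal c v) := by
      rw [gaussianReal_map_add_const]; ring_nf
    rw [h1, Measure.map_apply (measurable_add_const _) measurableSet_Ici]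
    congr 1
    ext x
    simp only [Set.mem_preimage, Set.mem_Ici]
    constructor <;> intro h <;> [skip; skip] <;> · simp [hm, hd] at * <;> linarith
  rw [hmap]
  -- measure of the difference interval
  have hsplit : gaussianReal c v (Set.Ici m)
      = gaussianReal c v (Set.Ico m (m + d)) + gaussianReal c v (Set.Ici (m + d)) := by
    rw [← measure_union ((Set.Iio_disjoint_Ici le_rfl).mono_left Set.Ico_subset_Iio_self) measurableSet_Ici,
      Set.Ico_union_Ici_eq_Ici (by linarith)]
  rw [hsplit, ENNReal.add_sub_cancel_right (measure_ne_top _ _)]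
  -- bound via density sup
  have : gaussianReal c v (Set.Ico m (m + d)) ≤ ENNReal.ofReal (1 / σ) * volume (Set.Ico m (m + d)) := by
    rw [gaussianReal_apply c hv]
    calc ∫⁻ x in Set.Ico m (m + d), gaussianPDF c v x ∂volume
        ≤ ∫⁻ _ in Set.Ico m (m + d), ENNReal.ofReal (1 / σ) ∂volume := by
          apply lintegral_mono
          intro x
          exact ENNReal.ofReal_le_ofReal (pdf_le hσ c x)
      _ = ENNReal.ofReal (1 / σ) * volume (Set.Ico m (m + d)) := by
          rw [setLIntegral_const]
  refine le_trans this ?_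
  rw [Real.volume_Ico]
  simp only [add_sub_cancel_left]
  rw [← ENNReal.ofReal_mul (by positivity)]
  apply ENNReal.ofReal_le_ofReal
  rw [one_div, inv_mul_eq_div]

end TSubPart

section Functional
variable {σ : ℝ}

lemma pdf_neg (c : ℝ) (v : NNReal) (x : ℝ) :
    gaussianPDFReal c v (-x) = gaussianPDFReal (-c) v x := by
  unfold gaussianPDFReal
  congr 2
  ring

lemma tsub_integral_le' (hσ : 0 < σ) (c c' : ℝ) :
    ∫⁻ x, (gaussianPDF c (σ ^ 2).toNNReal x - gaussianPDF c' (σ ^ 2).toNNReal x) ∂volume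
      ≤ ENNReal.ofReal (|c - c'| / σ) := by
  rcases lt_trichotomy c' c with h | h | h
  · rw [abs_of_pos (by linarith)]
    exact tsub_integral_le hσ h
  · subst h
    simp
  · -- reflect
    have href : ∫⁻ x, (gaussianPDF c (σ ^ 2).toNNReal x - gaussianPDF c' (σ ^ 2).toNNReal x) ∂volume
        = ∫⁻ x, (gaussianPDF (-c) (σ ^ 2).toNNReal x - gaussianPDF (-c') (σ ^ 2).toNNReal x) ∂volume := by
      have hmp := Measure.measurePreserving_neg (volume : Measure ℝ)
      rw [← hmp.lintegral_comp (f := fun x => gaussianPDF (-c) (σ ^ 2).toNNReal x - gaussianPDF (-c') (σ ^ 2).toNNReal x) ((measurable_gaussianPDF (-c) _).sub (measurable_gaussianPDF (-c') _))]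
      apply lintegral_congr
      intro x
      simp only [gaussianPDF, pdf_neg, neg_neg]
    rw [href, abs_of_neg (by linarith)]
    have := tsub_integral_le hσ (c := -c) (c' := -c') (by linarith)
    convert this using 2
    ring
end Functional

section Func2
variable {σ : ℝ}

lemma gauss_lintegral_le (hσ : 0 < σ) (c c' : ℝ) {g : ℝ → ℝ≥0∞}
    (hg : Measurable g) (hg1 : ∀ x, g x ≤ 1) :
    ∫⁻ x, g x ∂(gaussianReal c (σ ^ 2).toNNReal)
      ≤ ∫⁻ x, g x ∂(gaussianReal c' (σ ^ 2).toNNReal) + ENNReal.ofReal (|c - c'| / σ) := by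
  have hv : ((σ ^ 2).toNNReal : NNReal) ≠ 0 := var_ne_zero hσ
  rw [gaussianReal_of_var_ne_zero c hv, gaussianReal_of_var_ne_zero c' hv,
    lintegral_withDensity_eq_lintegral_mul _ (measurable_gaussianPDF _ _) hg,
    lintegral_withDensity_eq_lintegral_mul _ (measurable_gaussianPDF _ _) hg]
  calc ∫⁻ x, (gaussianPDF c (σ ^ 2).toNNReal * g) x ∂volume
      ≤ ∫⁻ x, ((gaussianPDF c' (σ ^ 2).toNNReal * g) x
          + (gaussianPDF c (σ ^ 2).toNNReal x - gaussianPDF c' (σ ^ 2).toNNReal x)) ∂volume := by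
        apply lintegral_mono
        intro x
        simp only [Pi.mul_apply]
        calc gaussianPDF c (σ ^ 2).toNNReal x * g x
            ≤ (gaussianPDF c' (σ ^ 2).toNNReal x
                + (gaussianPDF c (σ ^ 2).toNNReal x - gaussianPDF c' (σ ^ 2).toNNReal x)) * g x :=
              mul_le_mul_left le_add_tsub _
          _ = gaussianPDF c' (σ ^ 2).toNNReal x * g x
                + (gaussianPDF c (σ ^ 2).toNNReal x - gaussianPDF c' (σ ^ 2).toNNReal x) * g x := by
              rw [add_mul]
          _ ≤ gaussianPDF c' (σ ^ 2).toNNReal x * g x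
                + (gaussianPDF c (σ ^ 2).toNNReal x - gaussianPDF c' (σ ^ 2).toNNReal x) := by
              apply add_le_add_right
              calc _ ≤ (gaussianPDF c (σ ^ 2).toNNReal x - gaussianPDF c' (σ ^ 2).toNNReal x) * 1 :=
                    mul_le_mul_right (hg1 x) _
                _ = _ := mul_one _
    _ = ∫⁻ x, (gaussianPDF c' (σ ^ 2).toNNReal * g) x ∂volume
          + ∫⁻ x, (gaussianPDF c (σ ^ 2).toNNReal x - gaussianPDF c' (σ ^ 2).toNNReal x) ∂volume := by
        rw [lintegral_add_right _ (g := fun x => gaussianPDF c (σ ^ 2).toNNReal x - gaussianPDF c' (σ ^ 2).toNNReal x) ((measurable_gaussianPDF _ _).sub (measurable_gaussianPDF _ _))]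
    _ ≤ _ := add_le_add_right (tsub_integral_le' hσ c c') _

end Func2

section Product
variable {σ : ℝ} {ι : Type*} [Fintype ι] [DecidableEq ι]

lemma lmarginal_le_one {μf : ι → Measure ℝ} [∀ i, IsProbabilityMeasure (μf i)]
    {f : (ι → ℝ) → ℝ≥0∞} (hf1 : ∀ z, f z ≤ 1) (t : Finset ι) (x : ι → ℝ) :
    (∫⋯∫⁻_t, f ∂μf) x ≤ 1 := by
  unfold lmarginal
  calc ∫⁻ y : ∀ _ : t, ℝ, f (Function.updateFinset x t y) ∂(Measure.pi fun i : t => μf i)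
      ≤ ∫⁻ _ : ∀ _ : t, ℝ, 1 ∂(Measure.pi fun i : t => μf i) := lintegral_mono fun y => hf1 _
    _ = 1 := by simp

lemma lmarginal_comparison (hσ : 0 < σ) (μ0 : ℝ) (v w : ι → ℝ)
    (hvw : ∀ p, |v p - w p| ≤ μ0) {f : (ι → ℝ) → ℝ≥0∞}
    (hf : Measurable f) (hf1 : ∀ z, f z ≤ 1) (t : Finset ι) (x : ι → ℝ) :
    (∫⋯∫⁻_t, f ∂(fun p => gaussianReal (v p) (σ ^ 2).toNNReal)) x
      ≤ (∫⋯∫⁻_t, f ∂(fun p => gaussianReal (w p) (σ ^ 2).toNNReal)) x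
        + t.card * ENNReal.ofReal (μ0 / σ) := by
  induction t using Finset.induction generalizing x with
  | empty => simp
  | @insert i t hit ih =>
    rw [lmarginal_insert _ hf hit, lmarginal_insert _ hf hit]
    calc ∫⁻ y, (∫⋯∫⁻_t, f ∂(fun p => gaussianReal (v p) (σ ^ 2).toNNReal)) (Function.update x i y)
            ∂(gaussianReal (v i) (σ ^ 2).toNNReal)
        ≤ ∫⁻ y, ((∫⋯∫⁻_t, f ∂(fun p => gaussianReal (w p) (σ ^ 2).toNNReal)) (Function.update x i y)
            + t.card * ENNReal.ofReal (μ0 / σ)) ∂(gaussianReal (v i) (σ ^ 2).toNNReal) :=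
          lintegral_mono fun y => ih _
      _ = (∫⁻ y, (∫⋯∫⁻_t, f ∂(fun p => gaussianReal (w p) (σ ^ 2).toNNReal))
              (Function.update x i y) ∂(gaussianReal (v i) (σ ^ 2).toNNReal))
            + t.card * ENNReal.ofReal (μ0 / σ) := by
          rw [lintegral_add_right _ measurable_const, lintegral_const, measure_univ, mul_one]
      _ ≤ ((∫⁻ y, (∫⋯∫⁻_t, f ∂(fun p => gaussianReal (w p) (σ ^ 2).toNNReal))
              (Function.update x i y) ∂(gaussianReal (w i) (σ ^ 2).toNNReal))
            + ENNReal.ofReal (|v i - w i| / σ)) + t.card * ENNReal.ofReal (μ0 / σ) := by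
          apply add_le_add_left
          exact gauss_lintegral_le hσ (v i) (w i)
            ((hf.lmarginal _).comp (measurable_update x))
            (fun y => lmarginal_le_one hf1 t _)
      _ ≤ _ := by
          rw [Finset.card_insert_of_notMem hit]
          have h1 : ENNReal.ofReal (|v i - w i| / σ) ≤ ENNReal.ofReal (μ0 / σ) := by
            apply ENNReal.ofReal_le_ofReal
            exact div_le_div_of_nonneg_right (hvw i) hσ.le
          push_cast
          calc _ ≤ (∫⁻ y, (∫⋯∫⁻_t, f ∂(fun p => gaussianReal (w p) (σ ^ 2).toNNReal))
                  (Function.update x i y) ∂(gaussianReal (w i) (σ ^ 2).toNNReal))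
                + ENNReal.ofReal (μ0 / σ) + t.card * ENNReal.ofReal (μ0 / σ) := by
                gcongr
            _ = _ := by ring

end Product

section Pi2
variable {σ : ℝ} {ι : Type*} [Fintype ι] [DecidableEq ι]

lemma pi_gauss_comparison (hσ : 0 < σ) (μ0 : ℝ) (v w : ι → ℝ)
    (hvw : ∀ p, |v p - w p| ≤ μ0) {E : Set (ι → ℝ)} (hE : MeasurableSet E) :
    Measure.pi (fun p => gaussianReal (v p) (σ ^ 2).toNNReal) E
      ≤ Measure.pi (fun p => gaussianReal (w p) (σ ^ 2).toNNReal) E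
        + (Fintype.card ι) * ENNReal.ofReal (μ0 / σ) := by
  have hind : ∀ z : ι → ℝ, E.indicator (1 : (ι → ℝ) → ℝ≥0∞) z ≤ 1 := by
    intro z
    classical
    by_cases hz : z ∈ E <;> simp [hz]
  have hmeas : Measurable (E.indicator (1 : (ι → ℝ) → ℝ≥0∞)) := measurable_one.indicator hE
  rw [← lintegral_indicator_one hE, ← lintegral_indicator_one hE,
    lintegral_eq_lmarginal_univ (fun _ => (0:ℝ)), lintegral_eq_lmarginal_univ (fun _ => (0:ℝ))]
  have := lmarginal_comparison hσ μ0 v w hvw hmeas hind Finset.univ (fun _ => (0:ℝ))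
  simpa [Finset.card_univ] using this

lemma map_add_pi_gauss (σ : ℝ) (v : ι → ℝ) :
    Measure.map (fun z : ι → ℝ => v + z)
        (Measure.pi fun _ : ι => gaussianReal 0 (σ ^ 2).toNNReal)
      = Measure.pi (fun p => gaussianReal (v p) (σ ^ 2).toNNReal) := by
  have h : ∀ p : ι, MeasurePreserving (fun x => v p + x)
      (gaussianReal 0 (σ ^ 2).toNNReal) (gaussianReal (v p) (σ ^ 2).toNNReal) := by
    intro p
    refine ⟨measurable_const_add _, ?_⟩
    rw [gaussianReal_map_const_add, zero_add]
  have h2 := (measurePreserving_pi _ _ h).map_eq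
  have h3 : (fun (a : ι → ℝ) (i : ι) => v i + a i) = fun z : ι → ℝ => v + z := rfl
  rwa [h3] at h2

lemma map_translation_comparison (hσ : 0 < σ) (μ0 : ℝ) (hμ0 : 0 ≤ μ0) (v w : ι → ℝ)
    (hvw : ∀ p, |v p - w p| ≤ μ0) {E : Set (ι → ℝ)} (hE : MeasurableSet E) :
    ((Measure.map (fun z : ι → ℝ => v + z)
        (Measure.pi fun _ : ι => gaussianReal 0 (σ ^ 2).toNNReal)) E).toReal
      ≤ ((Measure.map (fun z : ι → ℝ => w + z)
        (Measure.pi fun _ : ι => gaussianReal 0 (σ ^ 2).toNNReal)) E).toReal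
        + (Fintype.card ι) * μ0 / σ := by
  rw [map_add_pi_gauss, map_add_pi_gauss]
  have key := pi_gauss_comparison hσ μ0 v w hvw hE
  have hcast : ((Fintype.card ι : ℝ≥0∞)) * ENNReal.ofReal (μ0 / σ)
      = ENNReal.ofReal ((Fintype.card ι) * μ0 / σ) := by
    rw [← ENNReal.ofReal_natCast (Fintype.card ι), ← ENNReal.ofReal_mul (by positivity),
      mul_div_assoc]
  rw [hcast] at key
  have hfin : Measure.pi (fun p => gaussianReal (w p) (σ ^ 2).toNNReal) E ≠ ⊤ :=
    measure_ne_top _ _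
  calc ((Measure.pi fun p => gaussianReal (v p) (σ ^ 2).toNNReal) E).toReal
      ≤ ((Measure.pi fun p => gaussianReal (w p) (σ ^ 2).toNNReal) E
          + ENNReal.ofReal ((Fintype.card ι) * μ0 / σ)).toReal := by
        apply ENNReal.toReal_mono _ key
        exact ENNReal.add_ne_top.mpr ⟨hfin, ENNReal.ofReal_ne_top⟩
    _ = _ := by
        rw [ENNReal.toReal_add hfin ENNReal.ofReal_ne_top,
          ENNReal.toReal_ofReal (by positivity)]

end Pi2

/-- The counterfactual payoff vector of an action profile `a`: the vector in `ℝ^{n·k}`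
whose `(i, a')` coordinate is `u_i(a', a_{-i})`, the payoff player `i` would have received
by playing `a'` against the others' play. -/
def cfVector {n k : ℕ} (u : Fin n → (Fin n → Fin k) → ℝ) (a : Fin n → Fin k) :
    Fin n × Fin k → ℝ :=
  fun p => u p.1 (Function.update a p.1 p.2)

/-- The counterfactual-payoff private monitoring structure: each player `i` receives the
signal `(u_i(a', a_{-i}) + N(0,σ²))_{a'}`, with all `n·k` noise coordinates i.i.d.
Gaussian. -/
noncomputable def cfMech {n k : ℕ} (u : Fin n → (Fin n → Fin k) → ℝ) (σ : ℝ)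
    (a : Fin n → Fin k) : Measure (Fin n × Fin k → ℝ) :=
  Measure.map (fun z => cfVector u a + z)
    (Measure.pi fun _ : Fin n × Fin k => gaussianReal 0 (σ ^ 2).toNNReal)

lemma cfVector_coord_diff {n k : ℕ} (u : Fin n → (Fin n → Fin k) → ℝ) {μ0 : ℝ} (hμ0 : 0 ≤ μ0)
    (hsens : ∀ (i j : Fin n), i ≠ j → ∀ (a : Fin n → Fin k) (b : Fin k),
      |u i a - u i (Function.update a j b)| ≤ μ0)
    (a : Fin n → Fin k) (j : Fin n) (b : Fin k) (p : Fin n × Fin k) :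
    |cfVector u a p - cfVector u (Function.update a j b) p| ≤ μ0 := by
  unfold cfVector
  by_cases h : p.1 = j
  · subst h
    rw [Function.update_idem, sub_self, abs_zero]
    exact hμ0
  · rw [Function.update_comm (Ne.symm h) b p.2 a]
    exact hsens p.1 j h (Function.update a p.1 p.2) b

/-- **Counterfactual payoffs in a `μ`-sensitive game are differentially private.**
In an `n`-player, `k`-action stage game with payoffs in `[0,1]` that is `μ`-sensitive,
the counterfactual payoff vector has L² sensitivity at most `√(n·k)·μ` with respect to
unilateral deviations, and consequently the monitoring structure adding i.i.d. `N(0,σ²)`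
noise to it is `(ε,γ)`-differentially private with `ε + γ = O(μ·√(n·k·log(1/μ)))` as
`μ → 0`. -/
theorem cfMech_dp (σ : ℝ) (hσ : 0 < σ) (n k : ℕ) :
    ∃ C : ℝ, ∀ μ : ℝ, 0 < μ → μ ≤ 1 / 2 →
      ∀ u : Fin n → (Fin n → Fin k) → ℝ,
        (∀ i a, u i a ∈ Set.Icc (0 : ℝ) 1) →
        (∀ (i j : Fin n), i ≠ j → ∀ (a : Fin n → Fin k) (b : Fin k),
          |u i a - u i (Function.update a j b)| ≤ μ) →
        -- L² sensitivity of the counterfactual payoff vector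
        (∀ (a : Fin n → Fin k) (j : Fin n) (b : Fin k),
          Real.sqrt (∑ p : Fin n × Fin k,
              (cfVector u a p - cfVector u (Function.update a j b) p) ^ 2)
            ≤ Real.sqrt (n * k) * μ) ∧
        -- differential privacy of the Gaussian counterfactual-payoff signals
        ∃ ε γ : ℝ, 0 ≤ ε ∧ 0 ≤ γ ∧
          ε + γ ≤ C * μ * Real.sqrt (n * k * Real.log (1 / μ)) ∧
          ∀ (a : Fin n → Fin k) (j : Fin n) (b : Fin k)
            (E : Set (Fin n × Fin k → ℝ)), MeasurableSet E →
            Real.exp (-ε) * (cfMech u σ (Function.update a j b) E).toReal - γ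
                ≤ (cfMech u σ a E).toReal ∧
              (cfMech u σ a E).toReal
                ≤ Real.exp ε * (cfMech u σ (Function.update a j b) E).toReal + γ := by
  refine ⟨(n * k : ℝ) / (σ * Real.sqrt (Real.log 2)), fun μ hμ hμ2 u _ hsens => ?_⟩
  have hcard : (Fintype.card (Fin n × Fin k) : ℝ) = (n : ℝ) * k := by
    simp [Fintype.card_prod]
  constructor
  · -- sensitivity
    intro a j b
    have hsum : ∑ p : Fin n × Fin k,
        (cfVector u a p - cfVector u (Function.update a j b) p) ^ 2 ≤ (n * k : ℝ) * μ ^ 2 := by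
      calc ∑ p : Fin n × Fin k, (cfVector u a p - cfVector u (Function.update a j b) p) ^ 2
          ≤ ∑ _p : Fin n × Fin k, μ ^ 2 := by
            apply Finset.sum_le_sum
            intro p _
            have h := cfVector_coord_diff u hμ.le hsens a j b p
            have h2 := abs_le.mp h
            nlinarith [h2.1, h2.2]
        _ = (n * k : ℝ) * μ ^ 2 := by
            rw [Finset.sum_const, Finset.card_univ, nsmul_eq_mul, hcard]
    calc Real.sqrt (∑ p : Fin n × Fin k,
            (cfVector u a p - cfVector u (Function.update a j b) p) ^ 2)
        ≤ Real.sqrt ((n * k : ℝ) * μ ^ 2) := Real.sqrt_le_sqrt hsum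
      _ = Real.sqrt (n * k) * μ := by
          rw [Real.sqrt_mul (by positivity), Real.sqrt_sq hμ.le]
  · -- differential privacy
    refine ⟨0, (n * k : ℝ) * μ / σ, le_refl 0, by positivity, ?_, ?_⟩
    · -- the O(μ √(nk log(1/μ))) bound
      by_cases hnk : (n : ℝ) * k = 0
      · simp [hnk]
      · have hn : (1 : ℝ) ≤ (n : ℝ) * k := by
          have hn' : 1 ≤ n * k := by
            rcases Nat.eq_zero_or_pos (n * k) with h | h
            · exfalso; apply hnk; exact_mod_cast congrArg (Nat.cast : ℕ → ℝ) h
            · exact h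
          calc (1 : ℝ) = ((1 : ℕ) : ℝ) := by norm_num
            _ ≤ ((n * k : ℕ) : ℝ) := by exact_mod_cast hn'
            _ = (n : ℝ) * k := by push_cast; ring
        have hlogμ : Real.log 2 ≤ Real.log (1 / μ) := by
          apply Real.log_le_log (by norm_num)
          rw [le_div_iff₀ hμ]; linarith
        have hlog2 : 0 < Real.log 2 := Real.log_pos (by norm_num)
        have hsq2 : 0 < Real.sqrt (Real.log 2) := Real.sqrt_pos.mpr hlog2
        have hsqrt : Real.sqrt (Real.log 2) ≤ Real.sqrt ((n : ℝ) * k * Real.log (1 / μ)) := by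
          apply Real.sqrt_le_sqrt
          nlinarith
        have heq : (0 : ℝ) + (n * k : ℝ) * μ / σ
            = ((n * k : ℝ) / (σ * Real.sqrt (Real.log 2)) * μ) * Real.sqrt (Real.log 2) := by
          field_simp
          ring
        rw [heq]
        calc ((n * k : ℝ) / (σ * Real.sqrt (Real.log 2)) * μ) * Real.sqrt (Real.log 2)
            ≤ ((n * k : ℝ) / (σ * Real.sqrt (Real.log 2)) * μ)
              * Real.sqrt ((n : ℝ) * k * Real.log (1 / μ)) := by
              apply mul_le_mul_of_nonneg_left hsqrt (by positivity)
          _ = _ := by ring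
    · -- the DP inequalities
      intro a j b E hE
      have hc : ∀ p, |cfVector u a p - cfVector u (Function.update a j b) p| ≤ μ :=
        cfVector_coord_diff u hμ.le hsens a j b
      have hc' : ∀ p, |cfVector u (Function.update a j b) p - cfVector u a p| ≤ μ := by
        intro p; rw [abs_sub_comm]; exact hc p
      have h1 := map_translation_comparison hσ μ hμ.le
        (cfVector u a) (cfVector u (Function.update a j b)) hc hE
      have h2 := map_translation_comparison hσ μ hμ.le
        (cfVector u (Function.update a j b)) (cfVector u a) hc' hE
      rw [hcard] at h1 h2
      constructor
      · rw [neg_zero, Real.exp_zero, one_mul]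
        have := h2
        unfold cfMech
        linarith [this]
      · rw [Real.exp_zero, one_mul]
        unfold cfMech
        linarith [h1]
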